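/- Fix an integer d ≥ 1, δ ∈ (0,1), and p > 0, and suppose ρ = ρ(g) is chosen so that α(g,ρ(g)) = (ρ(g)−1)/(2√g) → +∞ and g^{−1/2} e^{α(g,ρ(g))²} → p as g → ∞. Let z = (2d)^{−1}(1−δ) p √π. Then for every integer n ≥ 0 and every x ∈ ℤ^d, lim_{g→∞} w_n(g,ρ(g); x) = p √π · c_n(x) · z^n. -/

import Mathlib

/-!
Formalization of statements from "The strong interaction limit of
continuous-time weakly self-avoiding walk" by Brydges, Dahlqvist, Slade.

An `n`-step nearest-neighbour walk on `ℤ^d` starting at the origin is encoded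
bijectively by its sequence of steps `s : Fin n → Fin d × Bool`, a step being a
coordinate direction together with a sign.
-/

open scoped BigOperators Topology
open Filter MeasureTheory Real Set

namespace StrongInteraction

/-- The unit step in coordinate direction `e.1`, with sign `e.2`. -/
def stepVec (d : ℕ) (e : Fin d × Bool) : Fin d → ℤ :=
  fun i => if i = e.1 then (if e.2 then 1 else -1) else 0

/-- `walkPos s k` is the position `Y_k` of the walk started at the origin whose
successive nearest-neighbour steps are given by `s`. -/
def walkPos {d n : ℕ} (s : Fin n → Fin d × Bool) (k : Fin (n + 1)) : Fin d → ℤ :=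
  ∑ i ∈ Finset.univ.filter (fun i : Fin n => (i : ℕ) < (k : ℕ)), stepVec d (s i)

/-- `n_x(Y)`: the number of visits to `x` by the walk. -/
def visits {d n : ℕ} (s : Fin n → Fin d × Bool) (x : Fin d → ℤ) : ℕ :=
  (Finset.univ.filter (fun k : Fin (n + 1) => walkPos s k = x)).card

/-- The set of distinct vertices visited by the walk. -/
def walkRange {d n : ℕ} (s : Fin n → Fin d × Bool) : Finset (Fin d → ℤ) :=
  Finset.image (walkPos s) Finset.univ

/-- A walk is self-avoiding when its positions are pairwise distinct. -/
def SelfAvoiding {d n : ℕ} (s : Fin n → Fin d × Bool) : Prop :=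
  Function.Injective (walkPos s)

instance {d n : ℕ} (s : Fin n → Fin d × Bool) : Decidable (SelfAvoiding s) :=
  inferInstanceAs (Decidable (Function.Injective (walkPos s)))

/-- `c_n`: the number of `n`-step self-avoiding walks. -/
def csaw (d n : ℕ) : ℕ :=
  (Finset.univ.filter fun s : Fin n → Fin d × Bool => SelfAvoiding s).card


/-- `F_{g,ρ}(m) = ∫_0^∞ (s^{m-1}/(m-1)!) e^{-s - g s² + ρ s} ds`, the contribution
of a vertex visited `m` times, obtained from the Gamma(m,1) density of the sum of
`m` independent Exp(1) holding times. -/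
noncomputable def F (g ρ : ℝ) (m : ℕ) : ℝ :=
  ∫ t in Set.Ioi (0 : ℝ),
    (t ^ (m - 1) / (Nat.factorial (m - 1))) * Real.exp (-t - g * t ^ 2 + ρ * t)

/-- `c_n(x)`: the number of `n`-step self-avoiding walks ending at `x`. -/
def csawAt (d n : ℕ) (x : Fin d → ℤ) : ℕ :=
  (Finset.univ.filter fun s : Fin n → Fin d × Bool =>
    SelfAvoiding s ∧ walkPos s (Fin.last n) = x).card

/-- `w_n(g,ρ;x)`: the continuous-time weakly self-avoiding walk weight of
`n`-step walks ending at `x`, for killing rate `δ`, expressed via the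
Gamma-integral formula for the expectation over the exponential holding times. -/
noncomputable def wAt (d : ℕ) (δ : ℝ) (n : ℕ) (g ρ : ℝ) (x : Fin d → ℤ) : ℝ :=
  ((1 - δ) / (2 * d)) ^ n *
    ∑ s ∈ Finset.univ.filter (fun s : Fin n → Fin d × Bool => walkPos s (Fin.last n) = x),
      ∏ v ∈ walkRange s, F g ρ (visits s v)

lemma integral_Ioi_comp_add (f : ℝ → ℝ) (a c : ℝ) :
    ∫ x in Set.Ioi a, f (x + c) = ∫ x in Set.Ioi (a + c), f x := by
  rw [← integral_indicator measurableSet_Ioi, ← integral_indicator measurableSet_Ioi,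
    ← MeasureTheory.integral_add_right_eq_self (Set.indicator (Set.Ioi (a + c)) f) c]
  congr 1
  ext x
  by_cases h : a < x
  · rw [Set.indicator_of_mem (by exact h) , Set.indicator_of_mem (by simpa using h)]
  · rw [Set.indicator_of_notMem (by exact h), Set.indicator_of_notMem (by simpa using h)]

lemma integrableOn_pow_mul_exp (k : ℕ) {g : ℝ} (hg : 0 < g) (r : ℝ) :
    IntegrableOn (fun t : ℝ => t ^ k * Real.exp (r * t - g * t ^ 2)) (Set.Ioi 0) := by
  have h2 : (0 : ℝ) < g / 2 := by linarith
  have hbase : IntegrableOn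
      (fun x : ℝ => Real.exp (r ^ 2 / (2 * g)) * (x ^ (k : ℝ) * Real.exp (-(g / 2) * x ^ 2)))
      (Set.Ioi 0) :=
    (integrableOn_rpow_mul_exp_neg_mul_sq h2 (neg_one_lt_zero.trans_le (Nat.cast_nonneg k))).const_mul _
  refine hbase.mono' ?_ ?_
  · exact ((continuous_pow k).mul
      (Real.continuous_exp.comp (by continuity))).aestronglyMeasurable.restrict
  · filter_upwards [ae_restrict_mem measurableSet_Ioi] with t ht
    have ht0 : (0 : ℝ) < t := ht
    rw [Real.norm_eq_abs, abs_mul, abs_of_nonneg (by positivity : (0:ℝ) ≤ t ^ k),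
      abs_of_nonneg (Real.exp_pos _).le, Real.rpow_natCast]
    have hexp : Real.exp (r * t - g * t ^ 2) ≤
        Real.exp (r ^ 2 / (2 * g)) * Real.exp (-(g / 2) * t ^ 2) := by
      rw [← Real.exp_add]
      apply Real.exp_le_exp.2
      have key : r * t - g * t ^ 2 + (g / 2) * t ^ 2 ≤ r ^ 2 / (2 * g) := by
        rw [le_div_iff₀ (by linarith : (0:ℝ) < 2 * g)]
        nlinarith [sq_nonneg (r - g * t)]
      linarith
    calc t ^ k * Real.exp (r * t - g * t ^ 2)
        ≤ t ^ k * (Real.exp (r ^ 2 / (2 * g)) * Real.exp (-(g / 2) * t ^ 2)) :=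
          mul_le_mul_of_nonneg_left hexp (by positivity)
      _ = Real.exp (r ^ 2 / (2 * g)) * (t ^ k * Real.exp (-(g / 2) * t ^ 2)) := by ring

lemma integral_id_mul_exp_neg_mul_sq {g : ℝ} (hg : 0 < g) :
    ∫ x in Set.Ioi (0 : ℝ), x * Real.exp (-g * x ^ 2) = (2 * g)⁻¹ := by
  have hA : ∀ x : ℝ, HasDerivAt (fun y : ℝ => -(2 * g)⁻¹ * Real.exp (-g * y ^ 2))
      (x * Real.exp (-g * x ^ 2)) x := by
    intro x
    convert ((hasDerivAt_pow 2 x).const_mul (-g)).exp.const_mul (-(2 * g)⁻¹) using 1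
    all_goals try rfl
    field_simp
    ring
  have hB : Tendsto (fun y : ℝ => -(2 * g)⁻¹ * Real.exp (-g * y ^ 2)) atTop
      (𝓝 (-(2 * g)⁻¹ * 0)) := by
    refine Tendsto.const_mul _ ?_
    exact Real.tendsto_exp_atBot.comp
      ((tendsto_pow_atTop two_ne_zero).const_mul_atTop_of_neg (neg_lt_zero.2 hg))
  rw [integral_Ioi_of_hasDerivAt_of_tendsto' (fun x _ => hA x)
    (integrable_mul_exp_neg_mul_sq hg).integrableOn hB]
  simp

lemma gauss_tail :
    Tendsto (fun a : ℝ => ∫ v in Set.Ioi (-a), Real.exp (-v ^ 2)) atTop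
      (𝓝 (Real.sqrt π)) := by
  have hi : Integrable (fun v : ℝ => Real.exp (-v ^ 2)) := by
    simpa using integrable_exp_neg_mul_sq one_pos
  have h : Tendsto (fun a : ℝ => ∫ v : ℝ,
      Set.indicator (Set.Ioi (-a)) (fun v => Real.exp (-v ^ 2)) v) atTop
      (𝓝 (∫ v : ℝ, Real.exp (-v ^ 2))) := by
    refine tendsto_integral_filter_of_dominated_convergence (fun v => Real.exp (-v ^ 2))
      ?_ ?_ hi ?_
    · exact Eventually.of_forall fun a =>
        hi.aestronglyMeasurable.indicator measurableSet_Ioi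
    · refine Eventually.of_forall fun a => Eventually.of_forall fun v => ?_
      calc ‖Set.indicator (Set.Ioi (-a)) (fun v => Real.exp (-v ^ 2)) v‖
          ≤ ‖Real.exp (-v ^ 2)‖ := norm_indicator_le_norm_self _ _
        _ = Real.exp (-v ^ 2) := Real.norm_of_nonneg (Real.exp_pos _).le
    · refine Eventually.of_forall fun v => ?_
      have hev : ∀ᶠ a : ℝ in atTop,
          Set.indicator (Set.Ioi (-a)) (fun v => Real.exp (-v ^ 2)) v = Real.exp (-v ^ 2) := by
        filter_upwards [eventually_gt_atTop (-v)] with a ha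
        exact Set.indicator_of_mem (Set.mem_Ioi.mpr (by linarith)) _
      exact Tendsto.congr' (by filter_upwards [hev] with a ha using ha.symm)
        tendsto_const_nhds
  have hval : (∫ v : ℝ, Real.exp (-v ^ 2)) = Real.sqrt π := by
    have := integral_gaussian 1
    simpa using this
  rw [hval] at h
  refine h.congr fun a => ?_
  rw [integral_indicator measurableSet_Ioi]


lemma F_one_eq {g : ℝ} (hg : 0 < g) (ρ : ℝ) :
    F g ρ 1 = Real.exp (((ρ - 1) / (2 * Real.sqrt g)) ^ 2) * (Real.sqrt g)⁻¹ *
      ∫ v in Set.Ioi (-((ρ - 1) / (2 * Real.sqrt g))), Real.exp (-v ^ 2) := by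
  have hsg : 0 < Real.sqrt g := Real.sqrt_pos.2 hg
  set α : ℝ := (ρ - 1) / (2 * Real.sqrt g) with hα
  have hsq : Real.sqrt g ^ 2 = g := Real.sq_sqrt hg.le
  have h2 : 2 * Real.sqrt g * α = ρ - 1 := by
    rw [hα]; field_simp
  have hpt : ∀ t : ℝ, ((t : ℝ) ^ (1 - 1) / (Nat.factorial (1 - 1) : ℝ)) *
      Real.exp (-t - g * t ^ 2 + ρ * t)
      = Real.exp (α ^ 2) * Real.exp (-(Real.sqrt g * t - α) ^ 2) := by
    intro t
    have h0 : ((t : ℝ) ^ (1 - 1) / (Nat.factorial (1 - 1) : ℝ)) = 1 := by norm_num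
    rw [h0, one_mul, ← Real.exp_add]
    congr 1
    linear_combination t ^ 2 * hsq - t * h2
  have step1 : F g ρ 1 = Real.exp (α ^ 2) *
      ∫ t in Set.Ioi (0 : ℝ), Real.exp (-(Real.sqrt g * t - α) ^ 2) := by
    rw [F, setIntegral_congr_fun measurableSet_Ioi (fun t _ => hpt t), integral_const_mul]
  have step2 : (∫ t in Set.Ioi (0 : ℝ), Real.exp (-(Real.sqrt g * t - α) ^ 2))
      = (Real.sqrt g)⁻¹ * ∫ u in Set.Ioi (0 : ℝ), Real.exp (-(u - α) ^ 2) := by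
    have := integral_comp_mul_left_Ioi (fun u => Real.exp (-(u - α) ^ 2)) 0 hsg
    simpa [smul_eq_mul] using this
  have step3 : (∫ u in Set.Ioi (0 : ℝ), Real.exp (-(u - α) ^ 2))
      = ∫ v in Set.Ioi (-α), Real.exp (-v ^ 2) := by
    have := integral_Ioi_comp_add (fun v => Real.exp (-v ^ 2)) 0 (-α)
    simp only [zero_add] at this
    simp only [sub_eq_add_neg]
    exact this
  rw [step1, step2, step3]
  ring

lemma I1_le {g ρ : ℝ} (hg : 0 < g) (hρ : 0 < ρ) :
    (∫ t in Set.Ioi (0 : ℝ), t * Real.exp (ρ * t - g * t ^ 2))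
      ≤ Real.exp ((ρ / (2 * Real.sqrt g)) ^ 2) *
        ((2 * g)⁻¹ + ρ / (2 * g) * Real.sqrt (π / g)) := by
  have hsg : 0 < Real.sqrt g := Real.sqrt_pos.2 hg
  have hsq : Real.sqrt g ^ 2 = g := Real.sq_sqrt hg.le
  set β : ℝ := ρ / (2 * Real.sqrt g) with hβ
  set c : ℝ := ρ / (2 * g) with hc
  have hcpos : 0 < c := by positivity
  have h2gc : 2 * g * c = ρ := by rw [hc]; field_simp
  have hβ2 : β ^ 2 = ρ ^ 2 / (4 * g) := by
    rw [hβ, div_pow, mul_pow, hsq]; norm_num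
  have hgc2 : g * c ^ 2 = β ^ 2 := by
    rw [hβ2, hc, div_pow]
    field_simp
    ring
  have hpt : ∀ t : ℝ, t * Real.exp (ρ * t - g * t ^ 2)
      = Real.exp (β ^ 2) * ((t - c) * Real.exp (-g * (t - c) ^ 2)
          + c * Real.exp (-g * (t - c) ^ 2)) := by
    intro t
    have hexp : Real.exp (ρ * t - g * t ^ 2)
        = Real.exp (β ^ 2) * Real.exp (-g * (t - c) ^ 2) := by
      rw [← Real.exp_add]
      congr 1
      rw [hβ, hc]
      field_simp
      linear_combination ρ ^ 2 * hsq
    rw [hexp]; ring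
  have intA : Integrable (fun t : ℝ => (t - c) * Real.exp (-g * (t - c) ^ 2)) :=
    (integrable_mul_exp_neg_mul_sq hg).comp_sub_right c
  have intB : Integrable (fun t : ℝ => Real.exp (-g * (t - c) ^ 2)) :=
    (integrable_exp_neg_mul_sq hg).comp_sub_right c
  have hA : (∫ t in Set.Ioi (0 : ℝ), (t - c) * Real.exp (-g * (t - c) ^ 2)) ≤ (2 * g)⁻¹ := by
    have e1 : (∫ t in Set.Ioi (0 : ℝ), (t - c) * Real.exp (-g * (t - c) ^ 2))
        = ∫ x in Set.Ioi (-c), x * Real.exp (-g * x ^ 2) := by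
      have := integral_Ioi_comp_add (fun x => x * Real.exp (-g * x ^ 2)) 0 (-c)
      simp only [zero_add] at this
      simp only [sub_eq_add_neg]
      exact this
    have hunion : Set.Ioc (-c) 0 ∪ Set.Ioi (0 : ℝ) = Set.Ioi (-c) :=
      Set.Ioc_union_Ioi_eq_Ioi (by linarith)
    have e2 : (∫ x in Set.Ioi (-c), x * Real.exp (-g * x ^ 2))
        = (∫ x in Set.Ioc (-c) 0, x * Real.exp (-g * x ^ 2))
          + ∫ x in Set.Ioi (0 : ℝ), x * Real.exp (-g * x ^ 2) := by
      rw [← hunion, setIntegral_union (Set.Ioc_disjoint_Ioi le_rfl) measurableSet_Ioi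
        (integrable_mul_exp_neg_mul_sq hg).integrableOn
        (integrable_mul_exp_neg_mul_sq hg).integrableOn]
    have e3 : (∫ x in Set.Ioc (-c) 0, x * Real.exp (-g * x ^ 2)) ≤ 0 :=
      setIntegral_nonpos measurableSet_Ioc fun x hx =>
        mul_nonpos_of_nonpos_of_nonneg hx.2 (Real.exp_pos _).le
    rw [e1, e2, integral_id_mul_exp_neg_mul_sq hg]
    linarith
  have hB : (∫ t in Set.Ioi (0 : ℝ), Real.exp (-g * (t - c) ^ 2)) ≤ Real.sqrt (π / g) := by
    calc (∫ t in Set.Ioi (0 : ℝ), Real.exp (-g * (t - c) ^ 2))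
        ≤ ∫ t : ℝ, Real.exp (-g * (t - c) ^ 2) :=
          setIntegral_le_integral intB (Eventually.of_forall fun t => (Real.exp_pos _).le)
      _ = ∫ t : ℝ, Real.exp (-g * t ^ 2) :=
          integral_sub_right_eq_self (fun t => Real.exp (-g * t ^ 2)) c
      _ = Real.sqrt (π / g) := integral_gaussian g
  calc (∫ t in Set.Ioi (0 : ℝ), t * Real.exp (ρ * t - g * t ^ 2))
      = Real.exp (β ^ 2) * ((∫ t in Set.Ioi (0 : ℝ), (t - c) * Real.exp (-g * (t - c) ^ 2))
          + ∫ t in Set.Ioi (0 : ℝ), c * Real.exp (-g * (t - c) ^ 2)) := by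
        rw [setIntegral_congr_fun measurableSet_Ioi (fun t _ => hpt t), integral_const_mul,
          integral_add intA.integrableOn (intB.const_mul c).integrableOn]
    _ = Real.exp (β ^ 2) * ((∫ t in Set.Ioi (0 : ℝ), (t - c) * Real.exp (-g * (t - c) ^ 2))
          + c * ∫ t in Set.Ioi (0 : ℝ), Real.exp (-g * (t - c) ^ 2)) := by
        rw [integral_const_mul]
    _ ≤ Real.exp (β ^ 2) * ((2 * g)⁻¹ + c * Real.sqrt (π / g)) := by
        apply mul_le_mul_of_nonneg_left _ (Real.exp_pos _).le
        have := mul_le_mul_of_nonneg_left hB hcpos.le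
        linarith
    _ = Real.exp (β ^ 2) * ((2 * g)⁻¹ + ρ / (2 * g) * Real.sqrt (π / g)) := by rw [hc]


section Limits

variable {p : ℝ} (ρ : ℝ → ℝ)

lemma tendsto_sqrt_atTop : Tendsto Real.sqrt atTop atTop :=
  tendsto_atTop_atTop_of_monotone (fun _ _ h => Real.sqrt_le_sqrt h)
    (fun b => ⟨b ^ 2, by rw [Real.sqrt_sq_eq_abs]; exact le_abs_self b⟩)

variable (hp : 0 < p)
  (hα : Tendsto (fun g : ℝ => (ρ g - 1) / (2 * Real.sqrt g)) atTop atTop)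
  (hlim : Tendsto (fun g : ℝ =>
      g ^ (-(1 : ℝ) / 2) * Real.exp (((ρ g - 1) / (2 * Real.sqrt g)) ^ 2)) atTop (𝓝 p))

include hlim in
lemma hexp_alpha : Tendsto (fun g : ℝ =>
    Real.exp (((ρ g - 1) / (2 * Real.sqrt g)) ^ 2) * (Real.sqrt g)⁻¹) atTop (𝓝 p) := by
  refine hlim.congr' ?_
  filter_upwards [eventually_gt_atTop (0 : ℝ)] with g hg
  rw [mul_comm]
  congr 1
  rw [show (-(1 : ℝ) / 2) = -(1 / 2) by norm_num, Real.rpow_neg hg.le,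
    ← Real.sqrt_eq_rpow]

include hp hα hlim in
lemma halpha_div : Tendsto (fun g : ℝ =>
    ((ρ g - 1) / (2 * Real.sqrt g)) / Real.sqrt g) atTop (𝓝 0) := by
  have hlog : Tendsto (fun g : ℝ => Real.log (g ^ (-(1 : ℝ) / 2) *
      Real.exp (((ρ g - 1) / (2 * Real.sqrt g)) ^ 2))) atTop (𝓝 (Real.log p)) :=
    ((Real.continuousAt_log hp.ne').tendsto).comp hlim
  have h1 : Tendsto (fun g : ℝ => (-(1 : ℝ) / 2) * Real.log g +
      ((ρ g - 1) / (2 * Real.sqrt g)) ^ 2) atTop (𝓝 (Real.log p)) := by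
    refine hlog.congr' ?_
    filter_upwards [eventually_gt_atTop (0 : ℝ)] with g hg
    rw [Real.log_mul (ne_of_gt (Real.rpow_pos_of_pos hg _)) (Real.exp_ne_zero _),
      Real.log_rpow hg, Real.log_exp]
  have hloggg : Tendsto (fun g : ℝ => Real.log g / g) atTop (𝓝 0) := by
    have := Real.tendsto_pow_log_div_mul_add_atTop 1 0 1 one_ne_zero
    simpa using this
  have h2 : Tendsto (fun g : ℝ => ((ρ g - 1) / (2 * Real.sqrt g)) ^ 2 / g) atTop (𝓝 0) := by
    have hdiv : Tendsto (fun g : ℝ => ((-(1 : ℝ) / 2) * Real.log g +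
        ((ρ g - 1) / (2 * Real.sqrt g)) ^ 2) / g) atTop (𝓝 0) :=
      h1.div_atTop tendsto_id
    have hsum := hdiv.add (hloggg.const_mul ((1 : ℝ) / 2))
    simp only [mul_zero, add_zero] at hsum
    refine hsum.congr' ?_
    filter_upwards [eventually_gt_atTop (0 : ℝ)] with g hg
    field_simp
    ring
  have hs : Tendsto (fun g : ℝ =>
      Real.sqrt (((ρ g - 1) / (2 * Real.sqrt g)) ^ 2 / g)) atTop (𝓝 (Real.sqrt 0)) :=
    (Real.continuous_sqrt.tendsto 0).comp h2
  rw [Real.sqrt_zero] at hs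
  refine hs.congr' ?_
  filter_upwards [hα.eventually_ge_atTop 0] with g hA0
  rw [Real.sqrt_div (sq_nonneg _), Real.sqrt_sq hA0]

include hp hα hlim in
lemma hbeta_exp : Tendsto (fun g : ℝ =>
    Real.exp ((ρ g / (2 * Real.sqrt g)) ^ 2) * (Real.sqrt g)⁻¹) atTop (𝓝 p) := by
  have hd : Tendsto (fun g : ℝ =>
      (ρ g / (2 * Real.sqrt g)) ^ 2 - ((ρ g - 1) / (2 * Real.sqrt g)) ^ 2) atTop (𝓝 0) := by
    have h4g : Tendsto (fun g : ℝ => (4 * g)⁻¹) atTop (𝓝 0) :=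
      tendsto_inv_atTop_zero.comp (tendsto_id.const_mul_atTop four_pos)
    have := (halpha_div ρ hp hα hlim).add h4g
    rw [add_zero] at this
    refine this.congr' ?_
    filter_upwards [eventually_gt_atTop (0 : ℝ)] with g hg
    have hsg : 0 < Real.sqrt g := Real.sqrt_pos.2 hg
    have hsq : Real.sqrt g ^ 2 = g := Real.sq_sqrt hg.le
    have h4 : (2 * Real.sqrt g) ^ 2 = 4 * g := by rw [mul_pow, hsq]; ring
    have h2 : 2 * Real.sqrt g * Real.sqrt g = 2 * g := by
      rw [mul_assoc, Real.mul_self_sqrt hg.le]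
    rw [div_div, h2, div_pow, div_pow, h4]
    field_simp
    ring
  have hone : Tendsto (fun g : ℝ =>
      Real.exp ((ρ g / (2 * Real.sqrt g)) ^ 2 - ((ρ g - 1) / (2 * Real.sqrt g)) ^ 2))
      atTop (𝓝 1) := by
    have := (Real.continuous_exp.tendsto 0).comp hd
    simpa [Function.comp_def] using this
  have := hone.mul (hexp_alpha ρ hlim)
  rw [one_mul] at this
  refine this.congr fun g => ?_
  rw [← mul_assoc, ← Real.exp_add]
  ring_nf

include hp hα hlim in
lemma hbeta_div : Tendsto (fun g : ℝ => ρ g / (2 * g)) atTop (𝓝 0) := by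
  have h2g : Tendsto (fun g : ℝ => (2 * g)⁻¹) atTop (𝓝 0) :=
    tendsto_inv_atTop_zero.comp (tendsto_id.const_mul_atTop two_pos)
  have := (halpha_div ρ hp hα hlim).add h2g
  rw [add_zero] at this
  refine this.congr' ?_
  filter_upwards [eventually_gt_atTop (0 : ℝ)] with g hg
  have hsg : 0 < Real.sqrt g := Real.sqrt_pos.2 hg
  have h2 : 2 * Real.sqrt g * Real.sqrt g = 2 * g := by
    rw [mul_assoc, Real.mul_self_sqrt hg.le]
  rw [div_div, h2]
  field_simp
  ring

include hp hα hlim in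
lemma hbound_tendsto : Tendsto (fun g : ℝ =>
    Real.exp ((ρ g / (2 * Real.sqrt g)) ^ 2) *
      ((2 * g)⁻¹ + ρ g / (2 * g) * Real.sqrt (π / g))) atTop (𝓝 0) := by
  have h2sg : Tendsto (fun g : ℝ => (2 * Real.sqrt g)⁻¹) atTop (𝓝 0) :=
    tendsto_inv_atTop_zero.comp ((tendsto_sqrt_atTop.comp tendsto_id).const_mul_atTop two_pos)
  have hmain := (hbeta_exp ρ hp hα hlim).mul
    (h2sg.add ((hbeta_div ρ hp hα hlim).mul_const (Real.sqrt π)))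
  simp only [zero_mul, add_zero, mul_zero] at hmain
  refine hmain.congr' ?_
  filter_upwards [eventually_gt_atTop (0 : ℝ)] with g hg
  have hsg : 0 < Real.sqrt g := Real.sqrt_pos.2 hg
  have hsq : Real.sqrt g * Real.sqrt g = g := Real.mul_self_sqrt hg.le
  have hsq2 : Real.sqrt g ^ 2 = g := Real.sq_sqrt hg.le
  rw [Real.sqrt_div Real.pi_nonneg, mul_assoc]
  congr 1
  field_simp
  linear_combination (-1 : ℝ) * hsq2

include hp hα hlim in
lemma tendsto_F_one : Tendsto (fun g : ℝ => F g (ρ g) 1) atTop (𝓝 (p * Real.sqrt π)) := by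
  have := (hexp_alpha ρ hlim).mul (gauss_tail.comp hα)
  refine this.congr' ?_
  filter_upwards [eventually_gt_atTop (0 : ℝ)] with g hg
  rw [Function.comp_apply, F_one_eq hg (ρ g)]

include hp hα hlim in
lemma tendsto_F_two_le (m : ℕ) (hm : 2 ≤ m) :
    Tendsto (fun g : ℝ => F g (ρ g) m) atTop (𝓝 0) := by
  have hρpos : ∀ᶠ g : ℝ in atTop, 1 < ρ g := by
    filter_upwards [hα.eventually_ge_atTop 1, eventually_gt_atTop (0 : ℝ)] with g hA1 hg
    have hsg : 0 < Real.sqrt g := Real.sqrt_pos.2 hg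
    rw [le_div_iff₀ (by positivity)] at hA1
    linarith
  refine tendsto_of_tendsto_of_tendsto_of_le_of_le' tendsto_const_nhds
    (hbound_tendsto ρ hp hα hlim) ?_ ?_
  · filter_upwards [eventually_gt_atTop (0 : ℝ)] with g hg
    refine setIntegral_nonneg measurableSet_Ioi fun t ht => ?_
    have ht' : (0 : ℝ) ≤ t := (le_of_lt ht)
    positivity
  · filter_upwards [eventually_gt_atTop (0 : ℝ), hρpos] with g hg hρ1
    have hρ0 : 0 < ρ g := by linarith
    have hF_le : F g (ρ g) m ≤ ∫ t in Set.Ioi (0 : ℝ), t * Real.exp (ρ g * t - g * t ^ 2) := by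
      rw [F]
      have intF : IntegrableOn (fun t : ℝ =>
          t ^ (m - 1) / (Nat.factorial (m - 1) : ℝ) * Real.exp (-t - g * t ^ 2 + ρ g * t))
          (Set.Ioi 0) := by
        have heq : (fun t : ℝ =>
            t ^ (m - 1) / (Nat.factorial (m - 1) : ℝ) * Real.exp (-t - g * t ^ 2 + ρ g * t))
            = fun t : ℝ => ((Nat.factorial (m - 1) : ℝ))⁻¹ *
              (t ^ (m - 1) * Real.exp ((ρ g - 1) * t - g * t ^ 2)) := by
          funext t
          rw [show -t - g * t ^ 2 + ρ g * t = (ρ g - 1) * t - g * t ^ 2 by ring]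
          ring
        rw [heq]
        exact (integrableOn_pow_mul_exp (m - 1) hg (ρ g - 1)).const_mul _
      have intI : IntegrableOn (fun t : ℝ => t * Real.exp (ρ g * t - g * t ^ 2))
          (Set.Ioi 0) := by
        have := integrableOn_pow_mul_exp 1 hg (ρ g)
        simpa using this
      refine setIntegral_mono_on intF intI measurableSet_Ioi fun t ht => ?_
      have htpos : (0 : ℝ) < t := ht
      have e : Real.exp (-t - g * t ^ 2 + ρ g * t)
          = Real.exp (-t) * Real.exp (ρ g * t - g * t ^ 2) := by
        rw [← Real.exp_add]; ring_nf
      have key : t ^ (m - 1) / (Nat.factorial (m - 1) : ℝ) * Real.exp (-t) ≤ t := by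
        have h1 : t ^ (m - 1) / (Nat.factorial (m - 1) : ℝ) ≤ t * Real.exp t := by
          have e2 : t ^ (m - 1) = t * t ^ (m - 2) := by
            rw [← pow_succ']
            congr 1
            omega
          have hfl : (Nat.factorial (m - 2) : ℝ) ≤ (Nat.factorial (m - 1) : ℝ) :=
            Nat.cast_le.2 (Nat.factorial_le (by omega))
          have hd : t ^ (m - 2) / (Nat.factorial (m - 1) : ℝ)
              ≤ t ^ (m - 2) / (Nat.factorial (m - 2) : ℝ) :=
            div_le_div_of_nonneg_left (by positivity)
              (by positivity) hfl
          calc t ^ (m - 1) / (Nat.factorial (m - 1) : ℝ)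
              = t * (t ^ (m - 2) / (Nat.factorial (m - 1) : ℝ)) := by rw [e2]; ring
            _ ≤ t * (t ^ (m - 2) / (Nat.factorial (m - 2) : ℝ)) :=
                mul_le_mul_of_nonneg_left hd htpos.le
            _ ≤ t * Real.exp t :=
                mul_le_mul_of_nonneg_left
                  (Real.pow_div_factorial_le_exp t htpos.le _) htpos.le
        calc t ^ (m - 1) / (Nat.factorial (m - 1) : ℝ) * Real.exp (-t)
            ≤ t * Real.exp t * Real.exp (-t) :=
              mul_le_mul_of_nonneg_right h1 (Real.exp_pos _).le
          _ = t := by rw [mul_assoc, ← Real.exp_add]; simp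
      calc t ^ (m - 1) / (Nat.factorial (m - 1) : ℝ) * Real.exp (-t - g * t ^ 2 + ρ g * t)
          = (t ^ (m - 1) / (Nat.factorial (m - 1) : ℝ) * Real.exp (-t)) *
              Real.exp (ρ g * t - g * t ^ 2) := by rw [e]; ring
        _ ≤ t * Real.exp (ρ g * t - g * t ^ 2) :=
            mul_le_mul_of_nonneg_right key (Real.exp_pos _).le
    exact hF_le.trans (I1_le hg hρ0)

end Limits


lemma one_le_visits {d n : ℕ} (s : Fin n → Fin d × Bool) {v : Fin d → ℤ}
    (hv : v ∈ walkRange s) : 1 ≤ visits s v := by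
  obtain ⟨k, -, hk⟩ := Finset.mem_image.1 hv
  exact Finset.card_pos.2 ⟨k, Finset.mem_filter.2 ⟨Finset.mem_univ k, hk⟩⟩

lemma visits_eq_one {d n : ℕ} {s : Fin n → Fin d × Bool} (hs : SelfAvoiding s)
    {v : Fin d → ℤ} (hv : v ∈ walkRange s) : visits s v = 1 := by
  refine le_antisymm (Finset.card_le_one.2 fun a ha b hb => ?_) (one_le_visits s hv)
  have ha' := (Finset.mem_filter.1 ha).2
  have hb' := (Finset.mem_filter.1 hb).2
  exact hs (ha'.trans hb'.symm)

lemma card_walkRange {d n : ℕ} {s : Fin n → Fin d × Bool} (hs : SelfAvoiding s) :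
    (walkRange s).card = n + 1 := by
  rw [walkRange, Finset.card_image_of_injective _ hs, Finset.card_univ, Fintype.card_fin]

lemma exists_two_le_visits {d n : ℕ} {s : Fin n → Fin d × Bool} (hs : ¬ SelfAvoiding s) :
    ∃ v ∈ walkRange s, 2 ≤ visits s v := by
  rw [SelfAvoiding, Function.Injective] at hs
  push_neg at hs
  obtain ⟨k, l, hkl, hne⟩ := hs
  refine ⟨walkPos s k, Finset.mem_image_of_mem _ (Finset.mem_univ k), ?_⟩
  have hsub : ({k, l} : Finset (Fin (n + 1))) ⊆
      Finset.univ.filter (fun j : Fin (n + 1) => walkPos s j = walkPos s k) := by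
    intro j hj
    rcases Finset.mem_insert.1 hj with rfl | hj
    · exact Finset.mem_filter.2 ⟨Finset.mem_univ _, rfl⟩
    · rw [Finset.mem_singleton.1 hj]
      exact Finset.mem_filter.2 ⟨Finset.mem_univ _, hkl.symm⟩
  calc 2 = ({k, l} : Finset (Fin (n + 1))).card := (Finset.card_pair hne).symm
    _ ≤ _ := Finset.card_le_card hsub


/-- if `α(g,ρ(g)) = (ρ(g)-1)/(2√g) → ∞` and
`g^{-1/2} e^{α(g,ρ(g))²} → p > 0` as `g → ∞`, then with
`z = (2d)⁻¹(1-δ) p √π` one has `w_n(g,ρ(g);x) → p √π c_n(x) zⁿ`. -/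
theorem wAt_limit (d : ℕ) (hd : 1 ≤ d) (δ : ℝ) (hδ : δ ∈ Set.Ioo (0 : ℝ) 1)
    (p : ℝ) (hp : 0 < p) (ρ : ℝ → ℝ)
    (hα : Tendsto (fun g : ℝ => (ρ g - 1) / (2 * Real.sqrt g)) atTop atTop)
    (hlim : Tendsto (fun g : ℝ =>
        g ^ (-(1 : ℝ) / 2) * Real.exp (((ρ g - 1) / (2 * Real.sqrt g)) ^ 2)) atTop (𝓝 p))
    (z : ℝ) (hz : z = (2 * d : ℝ)⁻¹ * (1 - δ) * p * Real.sqrt Real.pi)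
    (n : ℕ) (x : Fin d → ℤ) :
    Tendsto (fun g : ℝ => wAt d δ n g (ρ g) x) atTop
      (𝓝 (p * Real.sqrt Real.pi * (csawAt d n x : ℝ) * z ^ n)) := by
  have hF : ∀ m : ℕ, 1 ≤ m → Tendsto (fun g => F g (ρ g) m) atTop
      (𝓝 (if m = 1 then p * Real.sqrt Real.pi else 0)) := by
    intro m hm
    rcases eq_or_lt_of_le hm with h1 | h2
    · rw [← h1, if_pos rfl]
      exact tendsto_F_one ρ hp hα hlim
    · rw [if_neg (by omega)]
      exact tendsto_F_two_le ρ hp hα hlim m (by omega)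
  have hsum : Tendsto (fun g => ∑ s ∈ Finset.univ.filter
        (fun s : Fin n → Fin d × Bool => walkPos s (Fin.last n) = x),
        ∏ v ∈ walkRange s, F g (ρ g) (visits s v)) atTop
      (𝓝 (∑ s ∈ Finset.univ.filter
        (fun s : Fin n → Fin d × Bool => walkPos s (Fin.last n) = x),
        ∏ v ∈ walkRange s,
          (if visits s v = 1 then p * Real.sqrt Real.pi else 0))) :=
    tendsto_finset_sum _ fun s _ =>
      tendsto_finset_prod _ fun v hv => hF _ (one_le_visits s hv)
  have hT : (∑ s ∈ Finset.univ.filter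
        (fun s : Fin n → Fin d × Bool => walkPos s (Fin.last n) = x),
        ∏ v ∈ walkRange s,
          (if visits s v = 1 then p * Real.sqrt Real.pi else 0))
      = (csawAt d n x : ℝ) * (p * Real.sqrt Real.pi) ^ (n + 1) := by
    have hterm : ∀ s ∈ Finset.univ.filter
        (fun s : Fin n → Fin d × Bool => walkPos s (Fin.last n) = x),
        (∏ v ∈ walkRange s, (if visits s v = 1 then p * Real.sqrt Real.pi else 0))
        = if SelfAvoiding s then (p * Real.sqrt Real.pi) ^ (n + 1) else 0 := by
      intro s _
      by_cases hs : SelfAvoiding s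
      · rw [if_pos hs,
          Finset.prod_congr rfl (fun v hv => by rw [if_pos (visits_eq_one hs hv)]),
          Finset.prod_const, card_walkRange hs]
      · rw [if_neg hs]
        obtain ⟨v, hv, h2⟩ := exists_two_le_visits hs
        exact Finset.prod_eq_zero hv (by rw [if_neg (by omega)])
    rw [Finset.sum_congr rfl hterm, ← Finset.sum_filter, Finset.sum_const,
      Finset.filter_filter]
    have hset : (Finset.univ.filter
        (fun s : Fin n → Fin d × Bool => walkPos s (Fin.last n) = x ∧ SelfAvoiding s))
        = Finset.univ.filter
          (fun s : Fin n → Fin d × Bool => SelfAvoiding s ∧ walkPos s (Fin.last n) = x) := by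
      apply Finset.filter_congr
      intro s _
      exact and_comm
    rw [hset, nsmul_eq_mul]
    rfl
  rw [hT] at hsum
  have hfinal := hsum.const_mul (((1 - δ) / (2 * (d : ℝ))) ^ n)
  have hval : ((1 - δ) / (2 * (d : ℝ))) ^ n * ((csawAt d n x : ℝ) *
      (p * Real.sqrt Real.pi) ^ (n + 1))
      = p * Real.sqrt Real.pi * (csawAt d n x : ℝ) * z ^ n := by
    have hzz : z = ((1 - δ) / (2 * (d : ℝ))) * (p * Real.sqrt Real.pi) := by
      rw [hz]; ring
    rw [hzz, mul_pow ((1 - δ) / (2 * (d : ℝ))) (p * Real.sqrt Real.pi) n, pow_succ]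
    ring
  rw [hval] at hfinal
  exact hfinal.congr fun g => rfl



end StrongInteraction
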